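/- Isoperimetric bound for the signed area of a closed lattice walk: let s₁, ..., s_n be a list of steps in ℤ × ℤ, each equal to one of (1,0), (−1,0), (0,1), (0,−1), whose total sum is (0,0). For each i let x_i denote the first coordinate of the partial sum s₁ + ... + s_{i−1}. Define the signed area A = Σ_{i : s_i = (0,1)} x_i − Σ_{i : s_i = (0,−1)} x_i. Then 16·|A| ≤ n². (This bounds the score in the 'jeu de la coccinelle': with a closed tour of at most 16 steps, the ladybird can gain at most 16 points, the optimum being a 4×4 square tour.) -/

import Mathlib

open Finset

theorem stmt_10 (s : List (ℤ × ℤ))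
    (hsteps : ∀ p ∈ s, p ∈ ({(1, 0), (-1, 0), (0, 1), (0, -1)} : Set (ℤ × ℤ)))
    (hclosed : s.sum = (0, 0)) :
    16 * |(∑ i : Fin s.length, if s.get i = (0, 1) then ((s.take (i : ℕ)).sum).1 else 0) -
          (∑ i : Fin s.length, if s.get i = (0, -1) then ((s.take (i : ℕ)).sum).1 else 0)| ≤
      (s.length : ℤ) ^ 2 := by
  classical
  set n := s.length with hn
  set g : ℕ → ℤ × ℤ := fun k => s.getD k (0, 0) with hg
  have hgget : ∀ (k : ℕ) (hk : k < n), g k = s.get ⟨k, hk⟩ := by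
    intro k hk
    simp [hg, List.getD_eq_getElem s (0,0) hk, List.getElem?_eq_getElem hk]
  have hgmem : ∀ k < n, g k = (1,0) ∨ g k = (-1,0) ∨ g k = (0,1) ∨ g k = (0,-1) := by
    intro k hk
    have := hsteps (s.get ⟨k, hk⟩) (s.get_mem _)
    rw [← hgget k hk] at this
    simpa [Set.mem_insert_iff] using this
  -- prefix sums
  have htake : ∀ m ≤ n, (s.take m).sum = ∑ k ∈ range m, g k := by
    intro m hm
    induction m with
    | zero => simp
    | succ m ih =>
      have hm' : m < n := hm
      rw [sum_range_succ, ← ih (le_of_lt hm'), List.sum_take_succ s m hm']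
      congr 1
      rw [hgget m hm']
      simp
  set x : ℕ → ℤ := fun m => ((s.take m).sum).1 with hxdef
  have hx1 : ∀ m ≤ n, x m = ∑ k ∈ range m, (g k).1 := by
    intro m hm
    rw [hxdef]; simp only [htake m hm, Prod.fst_sum]
  set P : Finset ℕ := (range n).filter fun k => g k = (1,0) with hP
  set Q : Finset ℕ := (range n).filter fun k => g k = (-1,0) with hQ
  set U : Finset ℕ := (range n).filter fun k => g k = (0,1) with hU
  set D : Finset ℕ := (range n).filter fun k => g k = (0,-1) with hD
  have htn : s.take n = s := by rw [hn]; exact List.take_length (l := s)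
  have hxn : x n = 0 := by rw [hxdef]; simp [htn, hclosed]
  have hyn : ((s.take n).sum).2 = 0 := by simp [htn, hclosed]
  have hsum1 : ∑ k ∈ range n, (g k).1 = (P.card : ℤ) - Q.card := by
    rw [hP, hQ, ← sum_boole, ← sum_boole, ← sum_sub_distrib]
    refine sum_congr rfl fun k hk => ?_
    rcases hgmem k (mem_range.mp hk) with h | h | h | h <;> simp [h]
  have hPQ : (P.card : ℤ) = Q.card := by
    have := hx1 n le_rfl
    rw [hxn, hsum1] at this
    linarith
  have hsum2 : ∑ k ∈ range n, (g k).2 = (U.card : ℤ) - D.card := by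
    rw [hU, hD, ← sum_boole, ← sum_boole, ← sum_sub_distrib]
    refine sum_congr rfl fun k hk => ?_
    rcases hgmem k (mem_range.mp hk) with h | h | h | h <;> simp [h]
  have hUD : U.card = D.card := by
    have h2 : ((s.take n).sum).2 = ∑ k ∈ range n, (g k).2 := by
      rw [htake n le_rfl, Prod.snd_sum]
    rw [hyn] at h2
    have : (U.card : ℤ) = D.card := by rw [hsum2] at h2; linarith
    exact_mod_cast this
  -- key window lemma
  have L : ∀ i ≤ n, ∀ j ≤ n, x i - x j ≤ (P.card : ℤ) := by
    intro i hi j hj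
    rcases le_total j i with h | h
    · rw [hx1 i hi, hx1 j hj, ← sum_Ico_eq_sub _ h]
      calc ∑ k ∈ Ico j i, (g k).1
          ≤ ∑ k ∈ Ico j i, (if g k = (1,0) then (1:ℤ) else 0) := by
            refine sum_le_sum fun k hk => ?_
            have hkn : k < n := lt_of_lt_of_le (mem_Ico.mp hk).2 hi
            rcases hgmem k hkn with h' | h' | h' | h' <;> simp [h']
        _ = ((Ico j i).filter fun k => g k = (1,0)).card := by rw [sum_boole]
        _ ≤ (P.card : ℤ) := by
            have : ((Ico j i).filter fun k => g k = (1,0)) ⊆ P := by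
              rw [hP]
              refine filter_subset_filter _ fun k hk => ?_
              exact mem_range.mpr (lt_of_lt_of_le (mem_Ico.mp hk).2 hi)
            exact_mod_cast card_le_card this
    · rw [hx1 i hi, hx1 j hj, hPQ]
      have : (∑ k ∈ range j, (g k).1) - ∑ k ∈ range i, (g k).1
          = ∑ k ∈ Ico i j, (g k).1 := (sum_Ico_eq_sub _ h).symm
      have h2 : (∑ k ∈ range i, (g k).1) - ∑ k ∈ range j, (g k).1
          = ∑ k ∈ Ico i j, (-(g k).1) := by rw [sum_neg_distrib]; linarith
      rw [h2]
      calc ∑ k ∈ Ico i j, (-(g k).1)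
          ≤ ∑ k ∈ Ico i j, (if g k = (-1,0) then (1:ℤ) else 0) := by
            refine sum_le_sum fun k hk => ?_
            have hkn : k < n := lt_of_lt_of_le (mem_Ico.mp hk).2 hj
            rcases hgmem k hkn with h' | h' | h' | h' <;> simp [h']
        _ = ((Ico i j).filter fun k => g k = (-1,0)).card := by rw [sum_boole]
        _ ≤ (Q.card : ℤ) := by
            have : ((Ico i j).filter fun k => g k = (-1,0)) ⊆ Q := by
              rw [hQ]
              refine filter_subset_filter _ fun k hk => ?_
              exact mem_range.mpr (lt_of_lt_of_le (mem_Ico.mp hk).2 hj)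
            exact_mod_cast card_le_card this
  -- rewrite goal sums
  have e1 : (∑ i : Fin s.length, if s.get i = (0, 1) then ((s.take (i : ℕ)).sum).1 else 0)
      = ∑ k ∈ U, x k := by
    rw [hU, sum_filter, ← Fin.sum_univ_eq_sum_range (fun k => if g k = (0,1) then x k else 0) n]
    refine Fintype.sum_congr _ _ fun i => ?_
    rw [hgget i.val i.isLt]
  have e2 : (∑ i : Fin s.length, if s.get i = (0, -1) then ((s.take (i : ℕ)).sum).1 else 0)
      = ∑ k ∈ D, x k := by
    rw [hD, sum_filter, ← Fin.sum_univ_eq_sum_range (fun k => if g k = (0,-1) then x k else 0) n]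
    refine Fintype.sum_congr _ _ fun i => ?_
    rw [hgget i.val i.isLt]
  rw [e1, e2]
  -- pair up U and D
  have e : {k // k ∈ U} ≃ {k // k ∈ D} := Finset.equivOfCardEq hUD
  have hUn : ∀ i : {k // k ∈ U}, (i : ℕ) ≤ n := fun i =>
    le_of_lt (mem_range.mp (mem_filter.mp i.2).1)
  have hDn : ∀ i : {k // k ∈ D}, (i : ℕ) ≤ n := fun i =>
    le_of_lt (mem_range.mp (mem_filter.mp i.2).1)
  have hA : (∑ k ∈ U, x k) - ∑ k ∈ D, x k = ∑ i : {k // k ∈ U}, (x i - x (e i)) := by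
    rw [sum_sub_distrib, ← Finset.sum_coe_sort U x, ← Finset.sum_coe_sort D x,
        ← Equiv.sum_comp e (fun d : {k // k ∈ D} => x d)]
  have hub : (∑ k ∈ U, x k) - ∑ k ∈ D, x k ≤ (U.card : ℤ) * P.card := by
    rw [hA]
    calc ∑ i : {k // k ∈ U}, (x i - x (e i)) ≤ ∑ _i : {k // k ∈ U}, (P.card : ℤ) :=
          sum_le_sum fun i _ => L _ (hUn i) _ (hDn (e i))
      _ = (U.card : ℤ) * P.card := by
          rw [sum_const, card_univ, Fintype.card_coe, nsmul_eq_mul]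
  have hlb : -((U.card : ℤ) * P.card) ≤ (∑ k ∈ U, x k) - ∑ k ∈ D, x k := by
    rw [hA]
    calc -((U.card : ℤ) * P.card) = ∑ _i : {k // k ∈ U}, -(P.card : ℤ) := by
          rw [sum_const, card_univ, Fintype.card_coe, nsmul_eq_mul]; ring
      _ ≤ ∑ i : {k // k ∈ U}, (x i - x (e i)) :=
          sum_le_sum fun i _ => by
            have := L _ (hDn (e i)) _ (hUn i); linarith
  have habs : |(∑ k ∈ U, x k) - ∑ k ∈ D, x k| ≤ (U.card : ℤ) * P.card :=
    abs_le.mpr ⟨hlb, hub⟩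
  -- counting
  have hcardn : (n : ℤ) = P.card + Q.card + U.card + D.card := by
    have hpt : ∀ k ∈ range n, (1:ℤ) = (if g k = (1,0) then (1:ℤ) else 0)
        + (if g k = (-1,0) then (1:ℤ) else 0) + (if g k = (0,1) then (1:ℤ) else 0)
        + (if g k = (0,-1) then (1:ℤ) else 0) := by
      intro k hk
      rcases hgmem k (mem_range.mp hk) with h | h | h | h <;> simp [h]
    calc (n : ℤ) = ∑ _k ∈ range n, (1:ℤ) := by simp
      _ = _ := sum_congr rfl hpt
      _ = (P.card : ℤ) + Q.card + U.card + D.card := by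
          rw [sum_add_distrib, sum_add_distrib, sum_add_distrib, sum_boole, sum_boole,
            sum_boole, sum_boole, ← hP, ← hQ, ← hU, ← hD]
  have hUDc : (U.card : ℤ) = D.card := by exact_mod_cast hUD
  have hlen : (s.length : ℤ) = (n : ℤ) := by rw [hn]
  rw [hlen]
  have ha0 : (0:ℤ) ≤ P.card := Int.natCast_nonneg _
  have hu0 : (0:ℤ) ≤ U.card := Int.natCast_nonneg _
  nlinarith [habs, abs_nonneg ((∑ k ∈ U, x k) - ∑ k ∈ D, x k),
    sq_nonneg ((P.card : ℤ) - U.card)]
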